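/- Let M be Hermitian with distinct eigenvalues λ₁ > ... > λₙ such that for a given k the sums Σ_{i∈I} λ_i over k-subsets I are pairwise distinct. Suppose the unitary eigenvector matrix g of M satisfies det(g_{[k],I}) ≠ 0 for all k-subsets I. Then the cyclic subspace of the induced operator M_{(k)} on ⋀ᵏ(ℂⁿ) generated by e₁∧...∧e_k is all of ⋀ᵏ(ℂⁿ), i.e., the tridiagonalization (M_{(k)})_T is a C(n,k)×C(n,k) tridiagonal matrix with eigenvalues exactly {Σ_{i∈I} λ_i : I ∈ C([n],k)}. -/

import Mathlib

open Matrix BigOperators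

noncomputable section

/-- The coordinates of the wedge `x₁ ∧ ... ∧ x_k` of vectors in `ℂⁿ` in the standard basis
`{e_{i₁} ∧ ... ∧ e_{i_k}}` of `⋀ᵏ(ℂⁿ)`, indexed by `k`-element subsets of `[n]`. -/
def wedgeCoords {n k : ℕ} (x : Fin k → Fin n → ℂ) :
    {S : Finset (Fin n) // S.card = k} → ℂ :=
  fun S => (Matrix.of fun i j : Fin k => x j (S.1.orderEmbOfFin S.2 i)).det

open Finset

variable {R : Type*} [CommRing R] {k n : ℕ}

theorem step1 (A : Matrix (Fin k) (Fin n) R) (B : Matrix (Fin n) (Fin k) R) :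
    (A * B).det = ∑ f : Fin k → Fin n, (∏ j, B (f j) j) * (A.submatrix id f).det := by
  have h1 : (A * B).det = ((A * B)ᵀ).det := (Matrix.det_transpose _).symm
  rw [h1]
  have h2 : ((A * B)ᵀ : Matrix (Fin k) (Fin k) R) =
      Matrix.of (fun j : Fin k => ∑ s : Fin n, B s j • (fun i => A i s)) := by
    ext j i
    simp [Matrix.mul_apply, Finset.sum_apply, mul_comm]
  rw [h2]
  have h3 : Matrix.det (Matrix.of (fun j : Fin k => ∑ s : Fin n, B s j • (fun i => A i s))) =
      (Matrix.detRowAlternating : (Fin k → R) [⋀^Fin k]→ₗ[R] R).toMultilinearMap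
        (fun j => ∑ s ∈ Finset.univ, B s j • (fun i => A i s)) := rfl
  rw [h3, (Matrix.detRowAlternating :
      (Fin k → R) [⋀^Fin k]→ₗ[R] R).toMultilinearMap.map_sum_finset]
  rw [Fintype.piFinset_univ]
  refine Finset.sum_congr rfl fun f _ => ?_
  have h4 : (Matrix.detRowAlternating : (Fin k → R) [⋀^Fin k]→ₗ[R] R).toMultilinearMap
      (fun j => B (f j) j • (fun i => A i (f j)))
      = (∏ j, B (f j) j) • (Matrix.detRowAlternating : (Fin k → R) [⋀^Fin k]→ₗ[R] R).toMultilinearMap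
        (fun j => (fun i => A i (f j))) := MultilinearMap.map_smul_univ _ _ _
  rw [h4, smul_eq_mul]
  congr 1
  rw [← Matrix.det_transpose (A.submatrix id f)]
  rfl

theorem himg (S : {S : Finset (Fin n) // S.card = k}) :
    Finset.image (S.1.orderEmbOfFin S.2) Finset.univ = S.1 := by
  ext a
  simp only [Finset.mem_image, Finset.mem_univ, true_and]
  constructor
  · rintro ⟨i, rfl⟩; exact Finset.orderEmbOfFin_mem _ _ _
  · intro ha
    have := Finset.range_orderEmbOfFin S.1 S.2
    have : a ∈ Set.range (S.1.orderEmbOfFin S.2) := by rw [this]; exact ha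
    exact this

theorem cauchy_binet (A : Matrix (Fin k) (Fin n) R) (B : Matrix (Fin n) (Fin k) R) :
    (A * B).det = ∑ S : {S : Finset (Fin n) // S.card = k},
      (B.submatrix (S.1.orderEmbOfFin S.2) id).det * (A.submatrix id (S.1.orderEmbOfFin S.2)).det := by
  rw [step1]
  rw [← Finset.sum_filter_of_ne (p := fun f => Function.Injective f)
    (fun f _ hne => by
      by_contra hinj
      apply hne
      -- f not injective: two equal columns
      have : ¬ Function.Injective f := hinj
      rw [Function.not_injective_iff] at this
      obtain ⟨i, j, hfij, hij⟩ := this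
      have : (A.submatrix id f).det = 0 := by
        apply Matrix.det_zero_of_column_eq hij
        intro p
        simp [Matrix.submatrix_apply, hfij]
      rw [this, mul_zero])]
  -- reindex by pairs (S, σ)
  rw [show (Finset.filter (fun f => Function.Injective f) Finset.univ).sum
        (fun f => (∏ j, B (f j) j) * (A.submatrix id f).det)
      = ∑ p : {S : Finset (Fin n) // S.card = k} × Equiv.Perm (Fin k),
          (∏ j, B (p.1.1.orderEmbOfFin p.1.2 (p.2 j)) j) *
            (A.submatrix id (fun j => p.1.1.orderEmbOfFin p.1.2 (p.2 j))).det from ?_]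
  · -- now split product
    rw [Fintype.sum_prod_type]
    refine Finset.sum_congr rfl fun S _ => ?_
    have hsub : ∀ σ : Equiv.Perm (Fin k),
        (A.submatrix id (fun j => S.1.orderEmbOfFin S.2 (σ j))).det
          = Equiv.Perm.sign σ * (A.submatrix id (S.1.orderEmbOfFin S.2)).det := by
      intro σ
      have : (A.submatrix id (fun j => S.1.orderEmbOfFin S.2 (σ j)))
          = (A.submatrix id (S.1.orderEmbOfFin S.2)).submatrix id σ := rfl
      rw [this, Matrix.det_permute']
    rw [Matrix.det_apply']
    rw [Finset.sum_mul]
    refine Finset.sum_congr rfl fun σ _ => ?_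
    rw [hsub σ]
    have : ∀ i, B (S.1.orderEmbOfFin S.2 (σ i)) i
        = (B.submatrix (S.1.orderEmbOfFin S.2) id) (σ i) i := fun i => rfl
    simp only [this]
    push_cast
    ring
  · -- the bijection
    refine (Finset.sum_bij (fun p _ => fun j => p.1.1.orderEmbOfFin p.1.2 (p.2 j)) ?_ ?_ ?_ ?_).symm
    · intro p _
      simp only [Finset.mem_filter, Finset.mem_univ, true_and]
      exact Function.Injective.comp (RelEmbedding.injective _) p.2.injective
    · intro p _ q _ hpq
      have hS : p.1 = q.1 := by
        have h1 : ∀ (r : {S : Finset (Fin n) // S.card = k} × Equiv.Perm (Fin k)),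
            Finset.image (fun j => r.1.1.orderEmbOfFin r.1.2 (r.2 j)) Finset.univ = r.1.1 := by
          intro r
          rw [show (fun j => r.1.1.orderEmbOfFin r.1.2 (r.2 j))
              = (r.1.1.orderEmbOfFin r.1.2) ∘ r.2 from rfl, ← Finset.image_image]
          rw [Finset.image_univ_equiv]
          exact himg r.1
        apply Subtype.ext
        have := congrArg (fun f => Finset.image f Finset.univ) hpq
        rw [← h1 p, ← h1 q]
        exact this
      obtain ⟨⟨S, hSc⟩, σ⟩ := p
      obtain ⟨⟨T, hTc⟩, τ⟩ := q
      have hST : S = T := congrArg Subtype.val hS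
      subst hST
      have hστ : σ = τ := by
        ext j
        have h2 := congrFun hpq j
        simp only at h2
        exact congrArg Fin.val (RelEmbedding.injective (S.orderEmbOfFin hSc) h2)
      simp [hστ]
    · intro f hf
      simp only [Finset.mem_filter, Finset.mem_univ, true_and] at hf
      have hcard : (Finset.image f Finset.univ).card = k := by
        rw [Finset.card_image_of_injective _ hf, Finset.card_univ, Fintype.card_fin]
      set S : {S : Finset (Fin n) // S.card = k} := ⟨Finset.image f Finset.univ, hcard⟩ with hSdef
      have hmem : ∀ j, f j ∈ S.1 := fun j => Finset.mem_image_of_mem f (Finset.mem_univ j)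
      have hsinj : Function.Injective
          (fun j => (Finset.orderIsoOfFin S.1 S.2).symm ⟨f j, hmem j⟩ : Fin k → Fin k) := by
        intro a b hab
        have h2 := congrArg (fun x => ((Finset.orderIsoOfFin S.1 S.2) x : Fin n)) hab
        simp only [OrderIso.apply_symm_apply] at h2
        exact hf h2
      have hsbij := (Finite.injective_iff_bijective).mp hsinj
      refine ⟨⟨S, Equiv.ofBijective _ hsbij⟩, Finset.mem_univ _, ?_⟩
      funext j
      show S.1.orderEmbOfFin S.2 ((Finset.orderIsoOfFin S.1 S.2).symm ⟨f j, hmem j⟩) = f j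
      rw [← Finset.coe_orderIsoOfFin_apply, OrderIso.apply_symm_apply]
    · intro p _; rfl

theorem wedge_update_smul {n k : ℕ} (x : Fin k → Fin n → ℂ) (i : Fin k) (c : ℂ) :
    wedgeCoords (Function.update x i (fun s => c * x i s)) = fun S => c * wedgeCoords x S := by
  funext S
  show (Matrix.of fun p q : Fin k =>
      (Function.update x i (fun s => c * x i s)) q (S.1.orderEmbOfFin S.2 p)).det = _
  have h1 : (Matrix.of fun p q : Fin k =>
        (Function.update x i (fun s => c * x i s)) q (S.1.orderEmbOfFin S.2 p))
      = (Matrix.of fun p q : Fin k => x q (S.1.orderEmbOfFin S.2 p)).updateCol i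
          (c • fun p => x i (S.1.orderEmbOfFin S.2 p)) := by
    ext p q
    rw [Matrix.updateCol_apply]
    by_cases hq : q = i <;> simp [hq, Function.update_apply]
  rw [h1, Matrix.det_updateCol_smul]
  congr 1
  have h2 : (fun p => x i (S.1.orderEmbOfFin S.2 p))
      = fun p => (Matrix.of fun p q : Fin k => x q (S.1.orderEmbOfFin S.2 p)) p i := rfl
  rw [h2, Matrix.updateCol_eq_self]
  rfl

set_option maxHeartbeats 1000000 in
/-- let `M = g Diag(λ) g⁻¹` be Hermitian with distinct eigenvalues
`λ₁ > ... > λₙ`, such that the sums `Σ_{i∈I} λ_i` over `k`-subsets `I` are pairwise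
distinct and all minors `det(g_{[k],I})` are nonzero. Then the cyclic subspace of the
induced operator `M_{(k)}` on `⋀ᵏ(ℂⁿ)` generated by `e₁∧...∧e_k` is all of `⋀ᵏ(ℂⁿ)`,
and the set of eigenvalues of `M_{(k)}` (hence of its tridiagonalization `(M_{(k)})_T`,
which is then `C(n,k) × C(n,k)`) is exactly `{Σ_{i∈I} λ_i : I a k-subset}`. -/
theorem stmt19 {n : ℕ} (M g : Matrix (Fin n) (Fin n) ℂ) (hM : M.IsHermitian)
    (lam : Fin n → ℝ) (hlam : StrictAnti lam)
    (hg : g ∈ Matrix.unitaryGroup (Fin n) ℂ)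
    (hspec : M = g * Matrix.diagonal (fun i => (lam i : ℂ)) * star g)
    (k : ℕ) (hk : k ≤ n)
    (hsums : ∀ S T : Finset (Fin n), S.card = k → T.card = k →
      ∑ i ∈ S, lam i = ∑ i ∈ T, lam i → S = T)
    (hminors : ∀ S : {S : Finset (Fin n) // S.card = k},
      (g.submatrix (Fin.castLE hk) (fun j => S.1.orderEmbOfFin S.2 j)).det ≠ 0)
    (D : Matrix {S : Finset (Fin n) // S.card = k} {S : Finset (Fin n) // S.card = k} ℂ)
    (hD : ∀ x : Fin k → Fin n → ℂ,
      D.mulVec (wedgeCoords x) =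
        ∑ i : Fin k, wedgeCoords (Function.update x i (M.mulVec (x i))))
    (S₀ : {S : Finset (Fin n) // S.card = k})
    (hS₀ : S₀.1 = Finset.image (Fin.castLE hk) Finset.univ) :
    Submodule.span ℂ (Set.range fun j : ℕ => (D ^ j).mulVec (Pi.single S₀ 1)) = ⊤ ∧
    spectrum ℂ D = {x : ℂ | ∃ S : Finset (Fin n), S.card = k ∧ x = ((∑ i ∈ S, lam i : ℝ) : ℂ)} := by
  classical
  have hgu : star g * g = 1 := (Unitary.mem_iff.mp hg).1
  have hgu' : g * star g = 1 := (Unitary.mem_iff.mp hg).2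
  -- columns of g are eigenvectors
  have hMg : M * g = g * Matrix.diagonal (fun i => (lam i : ℂ)) := by
    rw [hspec, Matrix.mul_assoc (g * Matrix.diagonal _), hgu, Matrix.mul_one]
  have h_eigcol : ∀ i : Fin n, M.mulVec (fun s => g s i) = fun s => (lam i : ℂ) * g s i := by
    intro i
    funext s
    have h1 : M.mulVec (fun s => g s i) s = (M * g) s i := by
      simp [Matrix.mulVec, Matrix.mul_apply, dotProduct]
    rw [h1, hMg, Matrix.mul_diagonal, mul_comm]
  set V : Matrix {S : Finset (Fin n) // S.card = k} {S : Finset (Fin n) // S.card = k} ℂ := fun S I => wedgeCoords (fun j s => g s (I.1.orderEmbOfFin I.2 j)) S with hV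
  set μ : {S : Finset (Fin n) // S.card = k} → ℂ := fun I => ((∑ a ∈ I.1, lam a : ℝ) : ℂ) with hμ
  have hμinj : Function.Injective μ := by
    intro I J h
    simp only [hμ, Complex.ofReal_inj] at h
    exact Subtype.ext (hsums _ _ I.2 J.2 h)
  -- eigen equation
  have h_eig : ∀ I : {S : Finset (Fin n) // S.card = k}, D.mulVec (fun S => V S I) = fun S => μ I * V S I := by
    intro I
    have h0 : (fun S => V S I) = wedgeCoords (fun j s => g s (I.1.orderEmbOfFin I.2 j)) := rfl
    rw [h0, hD]
    have h1 : ∀ i : Fin k,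
        wedgeCoords (Function.update (fun j s => g s (I.1.orderEmbOfFin I.2 j)) i
          (M.mulVec ((fun j s => g s (I.1.orderEmbOfFin I.2 j)) i)))
        = fun S => (lam (I.1.orderEmbOfFin I.2 i) : ℂ) *
            wedgeCoords (fun j s => g s (I.1.orderEmbOfFin I.2 j)) S := by
      intro i
      rw [show M.mulVec ((fun j s => g s (I.1.orderEmbOfFin I.2 j)) i)
          = fun s => (lam (I.1.orderEmbOfFin I.2 i) : ℂ) * g s (I.1.orderEmbOfFin I.2 i) from
          h_eigcol _]
      exact wedge_update_smul _ i _
    rw [Finset.sum_congr rfl (fun i _ => h1 i)]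
    funext S
    rw [Finset.sum_apply]
    rw [← Finset.sum_mul]
    have h2 : ∑ a ∈ I.1, lam a = ∑ i : Fin k, lam (I.1.orderEmbOfFin I.2 i) := by
      conv_lhs => rw [← himg I]
      exact Finset.sum_image (fun a _ b _ h => RelEmbedding.injective _ h)
    rw [show μ I = ((∑ a ∈ I.1, lam a : ℝ) : ℂ) from rfl, h2]
    push_cast
    rfl
  -- star V * V = 1
  have h_VV : star V * V = 1 := by
    ext I J
    have hcb := cauchy_binet (R := ℂ)
      (Matrix.of fun (i : Fin k) (s : Fin n) => starRingEnd ℂ (g s (I.1.orderEmbOfFin I.2 i)))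
      (Matrix.of fun (s : Fin n) (j : Fin k) => g s (J.1.orderEmbOfFin J.2 j))
    have hAB : (Matrix.of fun (i : Fin k) (s : Fin n) => starRingEnd ℂ (g s (I.1.orderEmbOfFin I.2 i)))
        * (Matrix.of fun (s : Fin n) (j : Fin k) => g s (J.1.orderEmbOfFin J.2 j))
        = Matrix.of fun i j => if I.1.orderEmbOfFin I.2 i = J.1.orderEmbOfFin J.2 j
            then (1 : ℂ) else 0 := by
      ext i j
      have : (star g * g) (I.1.orderEmbOfFin I.2 i) (J.1.orderEmbOfFin J.2 j)
          = (1 : Matrix (Fin n) (Fin n) ℂ) (I.1.orderEmbOfFin I.2 i) (J.1.orderEmbOfFin J.2 j) := by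
        rw [hgu]
      simp only [Matrix.mul_apply, Matrix.star_apply, Matrix.one_apply] at this ⊢
      simp only [Matrix.of_apply]
      exact this
    -- rewrite each summand of hcb
    have hterm : ∀ S : {S : Finset (Fin n) // S.card = k},
        ((Matrix.of fun (s : Fin n) (j : Fin k) => g s (J.1.orderEmbOfFin J.2 j)).submatrix
          (S.1.orderEmbOfFin S.2) id).det = V S J := fun _ => rfl
    have hterm2 : ∀ S : {S : Finset (Fin n) // S.card = k},
        ((Matrix.of fun (i : Fin k) (s : Fin n) => starRingEnd ℂ (g s (I.1.orderEmbOfFin I.2 i))).submatrix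
          id (S.1.orderEmbOfFin S.2)).det = starRingEnd ℂ (V S I) := by
      intro S
      have h3 : ((Matrix.of fun (i : Fin k) (s : Fin n) =>
            starRingEnd ℂ (g s (I.1.orderEmbOfFin I.2 i))).submatrix id (S.1.orderEmbOfFin S.2))
          = (Matrix.of fun p q : Fin k => g (S.1.orderEmbOfFin S.2 p) (I.1.orderEmbOfFin I.2 q))ᴴ := by
        ext p q; rfl
      rw [h3, Matrix.det_conjTranspose]
      rfl
    rw [hAB] at hcb
    have hlhs : (star V * V) I J = ∑ S : {S : Finset (Fin n) // S.card = k}, V S J * starRingEnd ℂ (V S I) := by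
      simp only [Matrix.mul_apply, Matrix.star_apply, Matrix.star_apply]
      exact Finset.sum_congr rfl fun S _ => by rw [mul_comm]; rfl
    have hsum : ∑ S : {S : Finset (Fin n) // S.card = k},
        ((Matrix.of fun (s : Fin n) (j : Fin k) => g s (J.1.orderEmbOfFin J.2 j)).submatrix
          (S.1.orderEmbOfFin S.2) id).det *
        ((Matrix.of fun (i : Fin k) (s : Fin n) => starRingEnd ℂ (g s (I.1.orderEmbOfFin I.2 i))).submatrix
          id (S.1.orderEmbOfFin S.2)).det
        = ∑ S : {S : Finset (Fin n) // S.card = k}, V S J * starRingEnd ℂ (V S I) :=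
      Finset.sum_congr rfl (fun S _ => by rw [hterm S, hterm2 S])
    rw [hlhs, ← hsum, ← hcb]
    by_cases hIJ : I = J
    · subst hIJ
      have : (Matrix.of fun i j => if I.1.orderEmbOfFin I.2 i = I.1.orderEmbOfFin I.2 j
          then (1 : ℂ) else 0) = (1 : Matrix (Fin k) (Fin k) ℂ) := by
        ext i j
        simp only [Matrix.of_apply, Matrix.one_apply]
        congr 1
        simp only [eq_iff_iff]
        exact ⟨fun h => RelEmbedding.injective _ h, fun h => by rw [h]⟩
      rw [this, Matrix.det_one, Matrix.one_apply_eq]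
    · -- zero row
      have hne : I.1 ≠ J.1 := fun h => hIJ (Subtype.ext h)
      have hnsub : ¬ I.1 ⊆ J.1 := by
        intro hsub
        exact hne (Finset.eq_of_subset_of_card_le hsub (by rw [I.2, J.2]))
      obtain ⟨a, haI, haJ⟩ := Finset.not_subset.mp hnsub
      obtain ⟨i₀, hi₀⟩ : ∃ i₀, I.1.orderEmbOfFin I.2 i₀ = a := by
        have := Finset.range_orderEmbOfFin I.1 I.2
        have ha : a ∈ Set.range (I.1.orderEmbOfFin I.2) := by rw [this]; exact haI
        exact ha
      have hdet0 : (Matrix.of fun i j => if I.1.orderEmbOfFin I.2 i = J.1.orderEmbOfFin J.2 j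
          then (1 : ℂ) else 0).det = 0 := by
        apply Matrix.det_eq_zero_of_row_eq_zero i₀
        intro j
        have hne2 : I.1.orderEmbOfFin I.2 i₀ ≠ J.1.orderEmbOfFin J.2 j := by
          rw [hi₀]
          intro h
          exact haJ (h ▸ Finset.orderEmbOfFin_mem J.1 J.2 j)
        simp [hne2]
      rw [hdet0]
      exact (Matrix.one_apply_ne hIJ).symm
  have h_VV' : V * star V = 1 := mul_eq_one_comm.mp h_VV
  -- D = V * diagonal μ * star V
  have h_DV : D * V = V * Matrix.diagonal μ := by
    ext S I
    have h1 : (D * V) S I = D.mulVec (fun S' => V S' I) S := by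
      simp [Matrix.mul_apply, Matrix.mulVec, dotProduct]
    rw [h1, h_eig I, Matrix.mul_diagonal, mul_comm]
  have h_D : D = V * Matrix.diagonal μ * star V := by
    calc D = D * (V * star V) := by rw [h_VV', Matrix.mul_one]
    _ = (D * V) * star V := by rw [Matrix.mul_assoc]
    _ = V * Matrix.diagonal μ * star V := by rw [h_DV]
  have key : ∀ (d1 d2 : Matrix {S : Finset (Fin n) // S.card = k} {S : Finset (Fin n) // S.card = k} ℂ),
      (V * d1 * star V) * (V * d2 * star V) = V * (d1 * d2) * star V := by
    intro d1 d2
    calc (V * d1 * star V) * (V * d2 * star V) = V * (d1 * ((star V * V) * (d2 * star V))) := by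
          simp only [Matrix.mul_assoc]
      _ = V * (d1 * d2) * star V := by rw [h_VV]; simp only [Matrix.one_mul, Matrix.mul_assoc]
  have h_pow : ∀ m : ℕ, D ^ m = V * Matrix.diagonal (fun I => μ I ^ m) * star V := by
    intro m
    induction m with
    | zero =>
      rw [pow_zero, show (fun I : {S : Finset (Fin n) // S.card = k} => μ I ^ 0)
          = fun _ => (1 : ℂ) from funext fun I => pow_zero _, Matrix.diagonal_one,
        Matrix.mul_one, h_VV']
    | succ m ih =>
      rw [pow_succ, ih, h_D, key, Matrix.diagonal_mul_diagonal]
      rw [show (fun I : {S : Finset (Fin n) // S.card = k} => μ I ^ m * μ I)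
          = fun I => μ I ^ (m + 1) from funext fun I => (pow_succ _ _).symm]
  have hVdet1 : V.det * (star V).det = 1 := by rw [← Matrix.det_mul, h_VV', Matrix.det_one]
  have hV0 : V.det ≠ 0 := left_ne_zero_of_mul_eq_one hVdet1
  have hsV0 : (star V).det ≠ 0 := right_ne_zero_of_mul_eq_one hVdet1
  -- spectrum
  have h_spec : spectrum ℂ D = Set.range μ := by
    rw [← spectrum_diagonal μ]
    ext z
    rw [spectrum.mem_iff, spectrum.mem_iff, not_iff_not]
    have h1 : algebraMap ℂ (Matrix {S : Finset (Fin n) // S.card = k}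
          {S : Finset (Fin n) // S.card = k} ℂ) z - D
        = V * (algebraMap ℂ (Matrix {S : Finset (Fin n) // S.card = k}
          {S : Finset (Fin n) // S.card = k} ℂ) z - Matrix.diagonal μ) * star V := by
      rw [h_D, Matrix.mul_sub, Matrix.sub_mul]
      congr 1
      rw [Algebra.algebraMap_eq_smul_one]
      rw [Matrix.mul_smul, Matrix.mul_one, Matrix.smul_mul, h_VV']
    rw [h1, Matrix.isUnit_iff_isUnit_det, Matrix.isUnit_iff_isUnit_det,
      Matrix.det_mul, Matrix.det_mul]
    simp only [isUnit_iff_ne_zero]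
    constructor
    · intro h h0
      exact h (by rw [h0, mul_zero, zero_mul])
    · intro h
      exact mul_ne_zero (mul_ne_zero hV0 h) hsV0
  -- coordinates of the cyclic vector
  set c : {S : Finset (Fin n) // S.card = k} → ℂ := fun I => (star V) I S₀ with hc
  have h_w : V.mulVec c = Pi.single S₀ 1 := by
    funext S
    have h1 : V.mulVec c S = (V * star V) S S₀ := by
      simp [Matrix.mulVec, Matrix.mul_apply, dotProduct, hc]
    rw [h1, h_VV', Matrix.one_apply, Pi.single_apply]
  have hembS₀ : ∀ i, S₀.1.orderEmbOfFin S₀.2 i = Fin.castLE hk i := by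
    have h := Finset.orderEmbOfFin_unique S₀.2 (f := Fin.castLE hk)
      (fun i => by rw [hS₀]; exact Finset.mem_image_of_mem _ (Finset.mem_univ i))
      (Fin.strictMono_castLE hk)
    intro i
    rw [← h]
  have h_c0 : ∀ I, c I ≠ 0 := by
    intro I
    have h1 : V S₀ I = (g.submatrix (Fin.castLE hk) (fun j => I.1.orderEmbOfFin I.2 j)).det := by
      show (Matrix.of fun p q : Fin k =>
        g (S₀.1.orderEmbOfFin S₀.2 p) (I.1.orderEmbOfFin I.2 q)).det = _
      rw [show (Matrix.of fun p q : Fin k =>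
          g (S₀.1.orderEmbOfFin S₀.2 p) (I.1.orderEmbOfFin I.2 q))
          = g.submatrix (Fin.castLE hk) (fun j => I.1.orderEmbOfFin I.2 j) from by
        ext p q
        rw [Matrix.submatrix_apply, Matrix.of_apply, hembS₀ p]]
    have h2 : c I = star (V S₀ I) := rfl
    rw [h2, h1]
    exact star_ne_zero.mpr (hminors I)
  have h_powvec : ∀ m : ℕ, (D ^ m).mulVec (Pi.single S₀ 1)
      = V.mulVec (fun I => μ I ^ m * c I) := by
    intro m
    rw [← h_w, h_pow m, Matrix.mulVec_mulVec]
    have h1 : V * Matrix.diagonal (fun I => μ I ^ m) * star V * V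
        = V * Matrix.diagonal (fun I => μ I ^ m) := by
      rw [Matrix.mul_assoc, h_VV, Matrix.mul_one]
    rw [h1, ← Matrix.mulVec_mulVec]
    have h2 : Matrix.diagonal (fun I => μ I ^ m) *ᵥ c = fun I => μ I ^ m * c I := by
      funext I
      rw [Matrix.mulVec_diagonal]
    rw [h2]
  refine ⟨?_, ?_⟩
  · -- span
    rw [eq_top_iff]
    rintro x -
    set e := Fintype.equivFin {S : Finset (Fin n) // S.card = k} with he
    set Bm : Matrix {S : Finset (Fin n) // S.card = k} {S : Finset (Fin n) // S.card = k} ℂ :=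
      fun S J => (D ^ ((e J : ℕ))).mulVec (Pi.single S₀ 1) S with hBm
    have hBfac : Bm = V * (Matrix.of fun I J => μ I ^ ((e J : ℕ)) * c I) := by
      ext S J
      show (D ^ ((e J : ℕ))).mulVec (Pi.single S₀ 1) S = _
      rw [h_powvec]
      simp [Matrix.mul_apply, Matrix.mulVec, dotProduct]
    have hdetB : IsUnit Bm.det := by
      rw [hBfac, Matrix.det_mul]
      have hP : (Matrix.of fun I J => μ I ^ ((e J : ℕ)) * c I)
          = Matrix.diagonal c * ((Matrix.vandermonde (fun i => μ (e.symm i))).submatrix e e) := by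
        ext I J
        rw [Matrix.diagonal_mul, Matrix.submatrix_apply, Matrix.vandermonde]
        simp [mul_comm]
      rw [hP, Matrix.det_mul, Matrix.det_submatrix_equiv_self, Matrix.det_diagonal,
        Matrix.det_vandermonde, isUnit_iff_ne_zero]
      apply mul_ne_zero hV0
      apply mul_ne_zero
      · rw [Finset.prod_ne_zero_iff]
        intro I _
        exact h_c0 I
      · rw [Finset.prod_ne_zero_iff]
        intro i _
        rw [Finset.prod_ne_zero_iff]
        intro j hj
        rw [sub_ne_zero]
        intro hij
        have hji : j = i := e.symm.injective (hμinj hij)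
        rw [hji] at hj
        exact absurd (Finset.mem_Ioi.mp hj) (lt_irrefl i)
    have hx : x = Bm.mulVec ((Bm⁻¹).mulVec x) := by
      rw [Matrix.mulVec_mulVec, Matrix.mul_nonsing_inv _ hdetB, Matrix.one_mulVec]
    have hexp : Bm.mulVec ((Bm⁻¹).mulVec x)
        = ∑ J : {S : Finset (Fin n) // S.card = k},
            ((Bm⁻¹).mulVec x) J • (fun S => Bm S J) := by
      funext S
      simp [Matrix.mulVec, dotProduct, Finset.sum_apply, mul_comm]
    rw [hx, hexp]
    apply Submodule.sum_mem
    intro J _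
    apply Submodule.smul_mem
    apply Submodule.subset_span
    exact ⟨(e J : ℕ), rfl⟩
  · rw [h_spec]
    ext x
    constructor
    · rintro ⟨I, rfl⟩
      exact ⟨I.1, I.2, rfl⟩
    · rintro ⟨S, hS, rfl⟩
      exact ⟨⟨S, hS⟩, rfl⟩
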